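/- Let λ > 0 and set γ₁ = √(3λ). Define H₁(k) = i(k − λ/k) − γ₁, H₁*(k) = −i(k − λ/k) − γ₁, and P₁(k) = H₁(k)/H₁*(k) for k ∈ ℂ \ {0} with H₁*(k) ≠ 0. Then for α = e^{2πi/3} and any k where all quantities are defined: P₁(k)·P₁(αk)·P₁(ᾱk) = −1, equivalently P₁(k)·P₁(ᾱk) = −1/P₁(αk). -/

import Mathlib

theorem stmt_6 (lam : ℝ) (hlam : 0 < lam) (γ₁ : ℝ) (hγ₁ : γ₁ = Real.sqrt (3 * lam))
    (α : ℂ) (hα : α = Complex.exp (2 * Real.pi * Complex.I / 3))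
    (H₁ H₁s P₁ : ℂ → ℂ)
    (hH₁ : ∀ k : ℂ, k ≠ 0 → H₁ k = Complex.I * (k - (lam : ℂ) / k) - γ₁)
    (hH₁s : ∀ k : ℂ, k ≠ 0 → H₁s k = -(Complex.I * (k - (lam : ℂ) / k)) - γ₁)
    (hP₁ : ∀ k : ℂ, k ≠ 0 → H₁s k ≠ 0 → P₁ k = H₁ k / H₁s k) :
    ∀ k : ℂ, k ≠ 0 →
      H₁s k ≠ 0 → H₁s (α * k) ≠ 0 → H₁s ((starRingEnd ℂ) α * k) ≠ 0 →
      P₁ k * P₁ (α * k) * P₁ ((starRingEnd ℂ) α * k) = -1 ∧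
      P₁ k * P₁ ((starRingEnd ℂ) α * k) = -1 / P₁ (α * k) := by
  have hIne : (Complex.I : ℂ) ≠ 0 := Complex.I_ne_zero
  have hπ : (Real.pi : ℂ) ≠ 0 := by exact_mod_cast Real.pi_ne_zero
  -- α is a primitive cube root of unity
  have hne1 : α ≠ 1 := by
    rw [hα, ne_eq, Complex.exp_eq_one_iff]
    rintro ⟨n, hn⟩
    field_simp at hn
    have h3 : ((n * 3 : ℤ) : ℂ) = ((1 : ℤ) : ℂ) := by
      push_cast
      have h2 : (2 * (Real.pi:ℂ) * Complex.I) * ((n:ℂ) * 3)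
          = (2 * (Real.pi:ℂ) * Complex.I) * 1 := by
        linear_combination (-(2 * (Real.pi:ℂ) * Complex.I)) * hn
      exact mul_left_cancel₀ (mul_ne_zero (mul_ne_zero two_ne_zero hπ) hIne) h2
    have := Int.cast_injective h3
    omega
  have hα3 : α ^ 3 = 1 := by
    rw [hα, ← Complex.exp_nat_mul]
    rw [show (3 : ℕ) * (2 * (Real.pi:ℂ) * Complex.I / 3) = 2 * Real.pi * Complex.I by
      push_cast; ring]
    exact Complex.exp_two_pi_mul_I
  have hs : α ^ 2 + α + 1 = 0 := by
    have h : (α - 1) * (α ^ 2 + α + 1) = 0 := by linear_combination hα3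
    rcases mul_eq_zero.mp h with h | h
    · exact absurd (sub_eq_zero.mp h) hne1
    · exact h
  have hα0 : α ≠ 0 := by
    intro h
    rw [h] at hs
    norm_num at hs
  -- conjugate of α is α²
  have hconj : (starRingEnd ℂ) α = α ^ 2 := by
    have h1 : (starRingEnd ℂ) α = Complex.exp (-(2 * Real.pi * Complex.I / 3)) := by
      rw [hα, ← Complex.exp_conj]
      congr 1
      simp [Complex.conj_I, map_ofNat]
      ring
    have h2 : α ^ 2 = Complex.exp (-(2 * Real.pi * Complex.I / 3)) := by
      rw [hα, ← Complex.exp_nat_mul,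
        show (2 : ℕ) * (2 * (Real.pi:ℂ) * Complex.I / 3)
          = -(2 * Real.pi * Complex.I / 3) + 2 * Real.pi * Complex.I by push_cast; ring,
        Complex.exp_add, Complex.exp_two_pi_mul_I, mul_one]
    rw [h1, h2]
  have hγ2 : ((γ₁ : ℂ)) ^ 2 = 3 * (lam : ℂ) := by
    have : γ₁ ^ 2 = 3 * lam := by
      rw [hγ₁, Real.sq_sqrt (by positivity : (0:ℝ) ≤ 3 * lam)]
    exact_mod_cast this
  intro k hk h1 h2 h3
  rw [hconj] at h3 ⊢
  have hk1 : α * k ≠ 0 := mul_ne_zero hα0 hk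
  have hk2 : α ^ 2 * k ≠ 0 := mul_ne_zero (pow_ne_zero 2 hα0) hk
  -- the key identity on the H-products
  have key : H₁ k * H₁ (α * k) * H₁ (α ^ 2 * k)
      = -(H₁s k * H₁s (α * k) * H₁s (α ^ 2 * k)) := by
    rw [hH₁ k hk, hH₁ (α * k) hk1, hH₁ (α ^ 2 * k) hk2,
      hH₁s k hk, hH₁s (α * k) hk1, hH₁s (α ^ 2 * k) hk2]
    have hI : Complex.I ^ 2 = -1 := Complex.I_sq
    set γ := (γ₁ : ℂ)
    set L := (lam : ℂ)
    field_simp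
    linear_combination (-2*k*γ*L^2*Complex.I^2 + 6*k^3*γ*L*Complex.I^2 + 2*k^3*γ^3
      - 4*α*k^3*γ*L*Complex.I^2 - 2*α*k^3*γ^3 + 2*α^2*k^3*γ*L*Complex.I^2
      + 2*α^3*k^3*γ*L*Complex.I^2 - 2*α^4*k^5*γ*Complex.I^2) * hs
      + (-2*k^3*γ) * hγ2 + (-6*k^3*γ*L) * hI
  have hprod : P₁ k * P₁ (α * k) * P₁ (α ^ 2 * k) = -1 := by
    rw [hP₁ k hk h1, hP₁ (α * k) hk1 h2, hP₁ (α ^ 2 * k) hk2 h3,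
      div_mul_div_comm, div_mul_div_comm, key, neg_div,
      div_self (mul_ne_zero (mul_ne_zero h1 h2) h3)]
  refine ⟨hprod, ?_⟩
  have hP2ne : P₁ (α * k) ≠ 0 := by
    intro h
    rw [h] at hprod
    norm_num at hprod
  field_simp
  linear_combination hprod
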